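/- Under the assumptions of the greedy demand theorem, the greedy demand set A_k is the smallest demand set: it is contained in every other demand set of consumer k at prices p. -/

import Mathlib

open Finset

variable {L : Type*} [Fintype L] [DecidableEq L]

/-- Hypotheses of the greedy demand construction: prices are strictly positive,
weights nonnegative, per-good net utilities `w l - p l` pairwise distinct, and
`A` consists of the at most `q` goods with the largest strictly positive
per-good net utilities. -/
structure GreedySetting (w p : L → ℝ) (q : ℕ) (A : Finset L) : Prop where
  hp : ∀ l, 0 < p l
  hw : ∀ l, 0 ≤ w l
  distinct : ∀ l l', l ≠ l' → w l - p l ≠ w l' - p l'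
  pos : ∀ l ∈ A, 0 < w l - p l
  card : A.card = min q (Finset.univ.filter (fun l => 0 < w l - p l)).card
  best : ∀ l ∈ A, ∀ l' ∉ A, 0 < w l' - p l' → w l' - p l' < w l - p l

/-- If `D` consists of goods with positive net utility, has at most `q` elements,
and contains the greedy set `A`, then `D = A`. -/
lemma greedy_superset_eq (w p : L → ℝ) (q : ℕ) (A : Finset L)
    (hG : GreedySetting w p q A) (D : Finset L)
    (hpos : ∀ x ∈ D, 0 < w x - p x) (hq : D.card ≤ q) (hAD : A ⊆ D) : D = A := by
  have hDP : D ⊆ Finset.univ.filter (fun l => 0 < w l - p l) := fun x hx =>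
    Finset.mem_filter.mpr ⟨Finset.mem_univ x, hpos x hx⟩
  have hDcard : D.card ≤ A.card := by
    have := Finset.card_le_card hDP
    rw [hG.card]; omega
  exact (Finset.eq_of_subset_of_card_le hAD hDcard).symm

/-- Nonstrict domination: the greedy sum dominates the sum over any feasible set
of positive-net-utility goods. -/
lemma sum_le_greedy (w p : L → ℝ) (q : ℕ) (A : Finset L)
    (hG : GreedySetting w p q A) :
    ∀ n (D : Finset L), (A \ D).card ≤ n → (∀ x ∈ D, 0 < w x - p x) →
      D.card ≤ q → ∑ x ∈ D, (w x - p x) ≤ ∑ x ∈ A, (w x - p x) := by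
  intro n
  induction n with
  | zero =>
      intro D hcard hpos hq
      have hAD : A ⊆ D := by
        intro a ha
        by_contra hna
        have h1 : a ∈ A \ D := Finset.mem_sdiff.mpr ⟨ha, hna⟩
        have := Finset.card_pos.mpr ⟨a, h1⟩
        omega
      rw [greedy_superset_eq w p q A hG D hpos hq hAD]
  | succ n ih =>
      intro D hcard hpos hq
      by_cases hDA : D ⊆ A
      · exact Finset.sum_le_sum_of_subset_of_nonneg hDA
          (fun i hi _ => le_of_lt (hG.pos i hi))
      · obtain ⟨m, hmD, hmA⟩ := Finset.not_subset.mp hDA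
        obtain ⟨l', hl'A, hl'D⟩ : ∃ l' ∈ A, l' ∉ D := by
          by_contra h
          push_neg at h
          have := greedy_superset_eq w p q A hG D hpos hq (fun a ha => h a ha)
          exact hmA (this ▸ hmD)
        set D' := insert l' (D.erase m) with hD'
        have hl'em : l' ∉ D.erase m := fun h => hl'D (Finset.mem_of_mem_erase h)
        have hpos' : ∀ x ∈ D', 0 < w x - p x := by
          intro x hx
          rcases Finset.mem_insert.mp hx with h | h
          · exact h ▸ hG.pos l' hl'A
          · exact hpos x (Finset.mem_of_mem_erase h)
        have hqD' : D'.card ≤ q := by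
          rw [hD']
          have h1 := Finset.card_insert_le l' (D.erase m)
          have h2 := Finset.card_erase_of_mem hmD
          have h3 : 0 < D.card := Finset.card_pos.mpr ⟨m, hmD⟩
          omega
        have hsd : A \ D' = (A \ D).erase l' := by
          ext a
          simp only [hD', Finset.mem_sdiff, Finset.mem_erase, Finset.mem_insert]
          constructor
          · rintro ⟨ha, hn⟩
            refine ⟨fun h => hn (Or.inl h), ha, fun haD => hn (Or.inr ⟨?_, haD⟩)⟩
            rintro rfl; exact hmA ha
          · rintro ⟨hne, ha, hnD⟩
            refine ⟨ha, ?_⟩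
            rintro (rfl | ⟨_, h⟩)
            exacts [hne rfl, hnD h]
        have hcard' : (A \ D').card ≤ n := by
          rw [hsd]
          have hl'mem : l' ∈ A \ D := Finset.mem_sdiff.mpr ⟨hl'A, hl'D⟩
          have := Finset.card_erase_of_mem hl'mem
          have := Finset.card_pos.mpr ⟨l', hl'mem⟩
          omega
        have hIH := ih D' hcard' hpos' hqD'
        have hsum : ∑ x ∈ D, (w x - p x) ≤ ∑ x ∈ D', (w x - p x) := by
          rw [hD', Finset.sum_insert hl'em, ← Finset.add_sum_erase D _ hmD]
          have := hG.best l' hl'A m hmA (hpos m hmD)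
          linarith
        linarith

/-- Strict domination when `D` misses an element of the greedy set. -/
lemma sum_lt_greedy (w p : L → ℝ) (q : ℕ) (A : Finset L)
    (hG : GreedySetting w p q A) (D : Finset L)
    (hpos : ∀ x ∈ D, 0 < w x - p x) (hq : D.card ≤ q)
    (l : L) (hlA : l ∈ A) (hlD : l ∉ D) :
    ∑ x ∈ D, (w x - p x) < ∑ x ∈ A, (w x - p x) := by
  by_cases hDA : D ⊆ A
  · have hsub : D ⊆ A.erase l := fun x hx =>
      Finset.mem_erase.mpr ⟨fun h => hlD (h ▸ hx), hDA hx⟩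
    have h1 : ∑ x ∈ D, (w x - p x) ≤ ∑ x ∈ A.erase l, (w x - p x) :=
      Finset.sum_le_sum_of_subset_of_nonneg hsub
        (fun i hi _ => le_of_lt (hG.pos i (Finset.mem_of_mem_erase hi)))
    have h2 : ∑ x ∈ A, (w x - p x)
        = (w l - p l) + ∑ x ∈ A.erase l, (w x - p x) :=
      (Finset.add_sum_erase A _ hlA).symm
    have := hG.pos l hlA
    linarith
  · obtain ⟨m, hmD, hmA⟩ := Finset.not_subset.mp hDA
    set D' := insert l (D.erase m) with hD'
    have hlem : l ∉ D.erase m := fun h => hlD (Finset.mem_of_mem_erase h)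
    have hpos' : ∀ x ∈ D', 0 < w x - p x := by
      intro x hx
      rcases Finset.mem_insert.mp hx with h | h
      · exact h ▸ hG.pos l hlA
      · exact hpos x (Finset.mem_of_mem_erase h)
    have hqD' : D'.card ≤ q := by
      rw [hD']
      have h1 := Finset.card_insert_le l (D.erase m)
      have h2 := Finset.card_erase_of_mem hmD
      have h3 : 0 < D.card := Finset.card_pos.mpr ⟨m, hmD⟩
      omega
    have hle := sum_le_greedy w p q A hG (A \ D').card D' le_rfl hpos' hqD'
    have hsum : ∑ x ∈ D, (w x - p x) < ∑ x ∈ D', (w x - p x) := by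
      rw [hD', Finset.sum_insert hlem, ← Finset.add_sum_erase D _ hmD]
      have := hG.best l hlA m hmA (hpos m hmD)
      linarith
    linarith

/-- The greedy demand set `A` is the smallest demand set: it is contained in
every net-utility maximizer `B` at prices `p`. -/
theorem greedy_demand_smallest (w p : L → ℝ) (q : ℕ) (A : Finset L)
    (hG : GreedySetting w p q A) (U : Finset L → ℝ)
    (hU : ∀ A' : Finset L,
      IsGreatest {x | ∃ B ⊆ A', B.card ≤ q ∧ x = ∑ l ∈ B, w l} (U A')) :
    ∀ B : Finset L,
      (∀ D : Finset L, U D - ∑ l ∈ D, p l ≤ U B - ∑ l ∈ B, p l) → A ⊆ B := by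
  intro B hB a haA
  by_contra haB
  obtain ⟨C, hCB, hCq, hCU⟩ := (hU B).1
  have hAq : A.card ≤ q := by rw [hG.card]; exact min_le_left _ _
  have hUA : ∑ l ∈ A, w l ≤ U A := (hU A).2 ⟨A, Finset.Subset.refl A, hAq, rfl⟩
  set C' := C.filter (fun x => 0 < w x - p x) with hC'
  have h1 : ∑ l ∈ C, p l ≤ ∑ l ∈ B, p l :=
    Finset.sum_le_sum_of_subset_of_nonneg hCB (fun i _ _ => (hG.hp i).le)
  have h2 : ∑ x ∈ C, (w x - p x) ≤ ∑ x ∈ C', (w x - p x) := by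
    rw [hC']
    rw [← Finset.sum_filter_add_sum_filter_not C (fun x => 0 < w x - p x)
      (fun x => w x - p x)]
    have : ∑ x ∈ C.filter (fun x => ¬ 0 < w x - p x), (w x - p x) ≤ 0 :=
      Finset.sum_nonpos (fun i hi => le_of_not_gt (Finset.mem_filter.mp hi).2)
    linarith
  have hC'pos : ∀ x ∈ C', 0 < w x - p x := fun x hx => (Finset.mem_filter.mp hx).2
  have hC'q : C'.card ≤ q := le_trans (Finset.card_filter_le _ _) hCq
  have haC' : a ∉ C' := fun h => haB (hCB (Finset.mem_filter.mp h).1)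
  have h3 : ∑ x ∈ C', (w x - p x) < ∑ x ∈ A, (w x - p x) :=
    sum_lt_greedy w p q A hG C' hC'pos hC'q a haA haC'
  have hCsub : ∑ x ∈ C, (w x - p x) = ∑ x ∈ C, w x - ∑ x ∈ C, p x :=
    Finset.sum_sub_distrib w p
  have hAsub : ∑ x ∈ A, (w x - p x) = ∑ x ∈ A, w x - ∑ x ∈ A, p x :=
    Finset.sum_sub_distrib w p
  have hfin := hB A
  linarith
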